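/- For every natural number n, the first player wins Building Nim BN(2n,5) if and only if n ≥ 5; formally, BNwins (fun _ : Fin 5 => 0) (2*n) ↔ n ≥ 5. -/

import Mathlib

instance : Std.Commutative (fun x y : ℕ => x ^^^ y) := ⟨Nat.xor_comm⟩
instance : Std.Associative (fun x y : ℕ => x ^^^ y) := ⟨Nat.xor_assoc⟩

/-- `BNwins s r` holds iff the player to move wins Building Nim from position `s`
(the stack heights) with `r` tokens remaining to be placed. When no tokens remain,
Nim play starts, and by Bouton's theorem the player to move wins iff the
Nim-sum (bitwise XOR) of the stack heights is nonzero. -/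
def BNwins {ℓ : ℕ} : (Fin ℓ → ℕ) → ℕ → Prop
  | s, 0 => Finset.univ.fold (fun x y : ℕ => x ^^^ y) 0 s ≠ 0
  | s, r + 1 => ∃ i : Fin ℓ, ¬ BNwins (Function.update s i (s i + 1)) r

namespace BN5

set_option maxRecDepth 100000
set_option exponentiation.threshold 1100000

/-! ### The abstract (mod 16) game on encoded states -/

/-- Size of the abstract state space: `16^5` states, each a 20-bit index. -/
def NB : ℕ := 1048576

/-- Digit `i` (base 16) of an encoded state. -/
def dgt (m i : ℕ) : ℕ := m / 16 ^ i % 16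

/-- Abstract move: add one token to stack `i`, working mod 16. -/
def chl (m i : ℕ) : ℕ := if dgt m i = 15 then m - 15 * 16 ^ i else m + 16 ^ i

/-- Abstract nim-value: XOR of the five digits. -/
def AX (m : ℕ) : ℕ := dgt m 0 ^^^ dgt m 1 ^^^ dgt m 2 ^^^ dgt m 3 ^^^ dgt m 4

/-- `Aw m k`: the player to move can place a token (against any reply) for `k`
rounds (2k tokens) and guarantee that the final abstract nim-value is nonzero. -/
def Aw : ℕ → ℕ → Prop
  | m, 0 => AX m ≠ 0
  | m, k + 1 => ∃ i : Fin 5, ∀ j : Fin 5, Aw (chl (chl m i.val) j.val) k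

/-- Encoding of a real position into an abstract state. -/
def enc (s : Fin 5 → ℕ) : ℕ :=
  s 0 % 16 + 16 * (s 1 % 16) + 256 * (s 2 % 16) + 4096 * (s 3 % 16) + 65536 * (s 4 % 16)

lemma BNwins_zero (s : Fin 5 → ℕ) :
    BNwins s 0 ↔ Finset.univ.fold (fun x y : ℕ => x ^^^ y) 0 s ≠ 0 := Iff.rfl

lemma BNwins_succ (s : Fin 5 → ℕ) (r : ℕ) :
    BNwins s (r + 1) ↔ ∃ i : Fin 5, ¬ BNwins (Function.update s i (s i + 1)) r := Iff.rfl

lemma fold_eq (s : Fin 5 → ℕ) :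
    Finset.univ.fold (fun x y : ℕ => x ^^^ y) 0 s
      = s 0 ^^^ (s 1 ^^^ (s 2 ^^^ (s 3 ^^^ (s 4 ^^^ 0)))) := rfl

lemma xor_mod16 (a b : ℕ) : (a ^^^ b) % 16 = a % 16 ^^^ b % 16 := by
  apply Nat.eq_of_testBit_eq
  intro i
  have h16 : (16 : ℕ) = 2 ^ 4 := rfl
  simp only [h16, Nat.testBit_mod_two_pow, Nat.testBit_xor]
  cases h : decide (i < 4) <;> simp

lemma xor_lt_16 {a b : ℕ} (ha : a < 16) (hb : b < 16) : a ^^^ b < 16 := by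
  interval_cases a <;> interval_cases b <;> decide

lemma dgt_enc0 (s : Fin 5 → ℕ) : dgt (enc s) 0 = s 0 % 16 := by
  simp only [enc, dgt]; omega

lemma dgt_enc1 (s : Fin 5 → ℕ) : dgt (enc s) 1 = s 1 % 16 := by
  simp only [enc, dgt]; omega

lemma dgt_enc2 (s : Fin 5 → ℕ) : dgt (enc s) 2 = s 2 % 16 := by
  simp only [enc, dgt]; omega

lemma dgt_enc3 (s : Fin 5 → ℕ) : dgt (enc s) 3 = s 3 % 16 := by
  simp only [enc, dgt]; omega

lemma dgt_enc4 (s : Fin 5 → ℕ) : dgt (enc s) 4 = s 4 % 16 := by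
  simp only [enc, dgt]; omega

lemma dgt_enc (s : Fin 5 → ℕ) (i : Fin 5) : dgt (enc s) i.val = s i % 16 := by
  fin_cases i
  · exact dgt_enc0 s
  · exact dgt_enc1 s
  · exact dgt_enc2 s
  · exact dgt_enc3 s
  · exact dgt_enc4 s

lemma AX_enc (s : Fin 5 → ℕ) :
    AX (enc s) = (Finset.univ.fold (fun x y : ℕ => x ^^^ y) 0 s) % 16 := by
  rw [fold_eq, Nat.xor_zero, AX, dgt_enc0, dgt_enc1, dgt_enc2, dgt_enc3, dgt_enc4,
    xor_mod16, xor_mod16, xor_mod16, xor_mod16]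
  ac_rfl

lemma enc_lt (s : Fin 5 → ℕ) : enc s < NB := by
  have h0 : s 0 % 16 < 16 := Nat.mod_lt _ (by norm_num)
  have h1 : s 1 % 16 < 16 := Nat.mod_lt _ (by norm_num)
  have h2 : s 2 % 16 < 16 := Nat.mod_lt _ (by norm_num)
  have h3 : s 3 % 16 < 16 := Nat.mod_lt _ (by norm_num)
  have h4 : s 4 % 16 < 16 := Nat.mod_lt _ (by norm_num)
  simp only [enc, NB]; omega

lemma enc_update_aux (s : Fin 5 → ℕ) (c : Fin 5)
    (h : enc (Function.update s c (s c + 1))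
      = enc s - 15 * 16 ^ c.val + (if s c % 16 = 15 then (0 : ℕ) else 16 ^ c.val * 16)) :
    True := trivial

lemma enc_update0 (s : Fin 5 → ℕ) :
    chl (enc s) 0 = enc (Function.update s 0 (s 0 + 1)) := by
  simp only [enc, Function.update_apply]
  norm_num
  simp only [Fin.reduceEq, if_false]
  simp only [chl, dgt]
  split_ifs with h <;> simp only [h, if_true, if_false] <;> omega

lemma enc_update1 (s : Fin 5 → ℕ) :
    chl (enc s) 1 = enc (Function.update s 1 (s 1 + 1)) := by
  simp only [enc, Function.update_apply]
  norm_num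
  simp only [Fin.reduceEq, if_false]
  simp only [chl, dgt]
  split_ifs with h <;> simp only [h, if_true, if_false] <;> omega

lemma enc_update2 (s : Fin 5 → ℕ) :
    chl (enc s) 2 = enc (Function.update s 2 (s 2 + 1)) := by
  simp only [enc, Function.update_apply]
  norm_num
  simp only [Fin.reduceEq, if_false]
  simp only [chl, dgt]
  split_ifs with h <;> simp only [h, if_true, if_false] <;> omega

lemma enc_update3 (s : Fin 5 → ℕ) :
    chl (enc s) 3 = enc (Function.update s 3 (s 3 + 1)) := by
  simp only [enc, Function.update_apply]
  norm_num
  simp only [Fin.reduceEq, if_false]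
  simp only [chl, dgt]
  split_ifs with h <;> simp only [h, if_true, if_false] <;> omega

lemma enc_update4 (s : Fin 5 → ℕ) :
    chl (enc s) 4 = enc (Function.update s 4 (s 4 + 1)) := by
  simp only [enc, Function.update_apply]
  norm_num
  simp only [Fin.reduceEq, if_false]
  simp only [chl, dgt]
  split_ifs with h <;> simp only [h, if_true, if_false] <;> omega

lemma enc_update (s : Fin 5 → ℕ) (i : Fin 5) :
    chl (enc s) i.val = enc (Function.update s i (s i + 1)) := by
  fin_cases i
  · exact enc_update0 s
  · exact enc_update1 s
  · exact enc_update2 s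
  · exact enc_update3 s
  · exact enc_update4 s

/-! ### Soundness of the abstract game -/

lemma Aw_sound : ∀ k (s : Fin 5 → ℕ), Aw (enc s) k → BNwins s (2 * k) := by
  intro k
  induction k with
  | zero =>
    intro s h
    show Finset.univ.fold (fun x y : ℕ => x ^^^ y) 0 s ≠ 0
    intro hf
    exact h (by rw [AX_enc, hf])
  | succ k ih =>
    intro s h
    obtain ⟨i, hj⟩ := h
    rw [show 2 * (k + 1) = (2 * k + 1) + 1 by ring, BNwins_succ]
    refine ⟨i, ?_⟩
    intro hB
    rw [BNwins_succ] at hB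
    obtain ⟨j, hj2⟩ := hB
    apply hj2
    apply ih
    have := hj j
    rwa [enc_update, enc_update] at this

lemma Aw_exact : ∀ k (s : Fin 5 → ℕ), (∀ i, s i + 2 * k < 16) →
    BNwins s (2 * k) → Aw (enc s) k := by
  intro k
  induction k with
  | zero =>
    intro s hb h
    have hf : Finset.univ.fold (fun x y : ℕ => x ^^^ y) 0 s ≠ 0 := h
    show AX (enc s) ≠ 0
    rw [AX_enc]
    have hlt : Finset.univ.fold (fun x y : ℕ => x ^^^ y) 0 s < 16 := by
      rw [fold_eq]
      have b0 := hb 0; have b1 := hb 1; have b2 := hb 2; have b3 := hb 3; have b4 := hb 4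
      exact xor_lt_16 (by omega) (xor_lt_16 (by omega) (xor_lt_16 (by omega)
        (xor_lt_16 (by omega) (by rw [Nat.xor_zero]; omega))))
    rw [Nat.mod_eq_of_lt hlt]
    exact hf
  | succ k ih =>
    intro s hb h
    rw [show 2 * (k + 1) = (2 * k + 1) + 1 by ring, BNwins_succ] at h
    obtain ⟨i, hi⟩ := h
    refine ⟨i, ?_⟩
    intro j
    rw [enc_update, enc_update]
    set s1 := Function.update s i (s i + 1) with hs1
    set s2 := Function.update s1 j (s1 j + 1) with hs2
    have hb2 : ∀ t, s2 t + 2 * k < 16 := by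
      intro t
      have h1 : s1 t ≤ s t + 1 := by
        rw [hs1, Function.update_apply]; split_ifs with h' <;> simp [h'] <;> omega
      have h2 : s2 t ≤ s1 t + 1 := by
        rw [hs2, Function.update_apply]; split_ifs with h' <;> simp [h'] <;> omega
      have := hb t; omega
    apply ih s2 hb2
    by_contra hnw
    exact hi (by rw [BNwins_succ]; exact ⟨j, hnw⟩)

/-! ### Bitmask machinery -/

def FULL : ℕ := 2 ^ NB - 1

/-- `repPow p B e`: the pattern `p` (of width `B` bits) repeated `2^e` times. -/
def repPow (p B : ℕ) : ℕ → ℕ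
  | 0 => p
  | e + 1 => repPow p B e ||| (repPow p B e <<< (2 ^ e * B))

lemma testBit_repPow {p B : ℕ} (hB : 0 < B) (hp : p < 2 ^ B) :
    ∀ e m, ((repPow p B e).testBit m = true) ↔ (m < 2 ^ e * B ∧ p.testBit (m % B) = true) := by
  intro e
  induction e with
  | zero =>
    intro m
    simp only [repPow, pow_zero, one_mul]
    by_cases hm : m < B
    · rw [Nat.mod_eq_of_lt hm]
      exact ⟨fun h => ⟨hm, h⟩, fun h => h.2⟩
    · have hf : p.testBit m = false :=
        Nat.testBit_lt_two_pow (lt_of_lt_of_le hp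
          (Nat.pow_le_pow_right (by norm_num) (le_of_not_gt hm)))
      simp [hf, hm]
  | succ e ih =>
    intro m
    rw [repPow, Nat.testBit_lor]
    have hpow : (2 : ℕ) ^ (e + 1) * B = 2 ^ e * B + 2 ^ e * B := by ring
    constructor
    · intro h
      rcases Bool.or_eq_true_iff.mp h with h | h
      · obtain ⟨h1, h2⟩ := (ih m).mp h
        exact ⟨by omega, h2⟩
      · rw [Nat.testBit_shiftLeft] at h
        rcases Bool.and_eq_true_iff.mp h with ⟨hle, hbit⟩
        have hle' : 2 ^ e * B ≤ m := by simpa using of_decide_eq_true hle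
        obtain ⟨h1, h2⟩ := (ih (m - 2 ^ e * B)).mp hbit
        have hmod : (m - 2 ^ e * B) % B = m % B := by
          rw [mul_comm] at hle' ⊢
          exact Nat.sub_mul_mod hle'
        rw [hmod] at h2
        exact ⟨by omega, h2⟩
    · rintro ⟨h1, h2⟩
      rw [Bool.or_eq_true_iff]
      by_cases hm : m < 2 ^ e * B
      · exact Or.inl ((ih m).mpr ⟨hm, h2⟩)
      · right
        rw [Nat.testBit_shiftLeft]
        have hle : 2 ^ e * B ≤ m := le_of_not_gt hm
        have hmod : (m - 2 ^ e * B) % B = m % B := by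
          rw [mul_comm] at hle ⊢
          exact Nat.sub_mul_mod hle
        rw [Bool.and_eq_true_iff]
        refine ⟨by simpa using hle, (ih (m - 2 ^ e * B)).mpr ⟨by omega, by rw [hmod]; exact h2⟩⟩

/-- Bitmask over all states: bit `m` is set iff `m < NB` and bit `t` of `m` is set. -/
def Tm (t : ℕ) : ℕ := repPow ((2 ^ 2 ^ t - 1) <<< 2 ^ t) (2 ^ (t + 1)) (19 - t)

lemma testBit_Tm {t : ℕ} (ht : t < 20) (m : ℕ) :
    ((Tm t).testBit m = true) ↔ (m < NB ∧ m.testBit t = true) := by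
  have hpos : 0 < (2 : ℕ) ^ 2 ^ t := Nat.pow_pos (by norm_num)
  have hp : (2 ^ 2 ^ t - 1) <<< 2 ^ t < 2 ^ 2 ^ (t + 1) := by
    rw [Nat.shiftLeft_eq]
    have h2 : (2 : ℕ) ^ 2 ^ (t + 1) = 2 ^ 2 ^ t * 2 ^ 2 ^ t := by
      rw [← pow_add]
      congr 1
      rw [pow_succ]; ring
    rw [h2]
    exact mul_lt_mul_of_pos_right (by omega) hpos
  rw [Tm, testBit_repPow (Nat.pow_pos (by norm_num)) hp]
  have hNB : (2 : ℕ) ^ (19 - t) * 2 ^ (t + 1) = NB := by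
    rw [← pow_add, show 19 - t + (t + 1) = 20 by omega]
    norm_num [NB]
  rw [hNB]
  have hr : ∀ r, r < 2 ^ (t + 1) →
      (((2 ^ 2 ^ t - 1) <<< 2 ^ t).testBit r = true ↔ 2 ^ t ≤ r) := by
    intro r hrlt
    rw [Nat.testBit_shiftLeft, Bool.and_eq_true_iff]
    constructor
    · rintro ⟨h1, _⟩; simpa using of_decide_eq_true h1
    · intro h1
      refine ⟨by simpa using h1, ?_⟩
      rw [Nat.testBit_two_pow_sub_one]
      have hlt : r - 2 ^ t < 2 ^ t := by
        have h2 : (2 : ℕ) ^ (t + 1) = 2 ^ t + 2 ^ t := by rw [pow_succ]; ring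
        omega
      simpa using hlt
  have hmlt : m % 2 ^ (t + 1) < 2 ^ (t + 1) := Nat.mod_lt _ (Nat.pow_pos (by norm_num))
  rw [hr _ hmlt]
  have hbit : (2 ^ t ≤ m % 2 ^ (t + 1)) ↔ m.testBit t = true := by
    rw [Nat.testBit_eq_decide_div_mod_eq]
    have hsplit : (2 : ℕ) ^ (t + 1) = 2 ^ t * 2 := by rw [pow_succ]
    rw [hsplit]
    have hdiv : m % (2 ^ t * 2) / 2 ^ t = m / 2 ^ t % 2 := Nat.mod_mul_right_div_self m _ _
    have hlt2 : m % (2 ^ t * 2) < 2 ^ t * 2 := Nat.mod_lt _ (by positivity)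
    constructor
    · intro h
      have hdd : m % (2 ^ t * 2) / 2 ^ t = 1 := by
        have hpos_t : 0 < (2 : ℕ) ^ t := Nat.pow_pos (by norm_num)
        have h1 : 1 ≤ m % (2 ^ t * 2) / 2 ^ t := (Nat.le_div_iff_mul_le hpos_t).mpr (by omega)
        have h2 : m % (2 ^ t * 2) / 2 ^ t < 2 := Nat.div_lt_of_lt_mul (by omega)
        omega
      rw [hdiv] at hdd
      simpa using hdd
    · intro h
      have h' : m / 2 ^ t % 2 = 1 := of_decide_eq_true h
      rw [← hdiv] at h'
      calc 2 ^ t = (m % (2 ^ t * 2) / 2 ^ t) * 2 ^ t := by rw [h', one_mul]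
        _ ≤ m % (2 ^ t * 2) := Nat.div_mul_le_self _ _
  rw [hbit]

def TOP (i : ℕ) : ℕ := Tm (4 * i) &&& Tm (4 * i + 1) &&& Tm (4 * i + 2) &&& Tm (4 * i + 3)

def LOWm (i : ℕ) : ℕ := FULL ^^^ TOP i

lemma testBit_FULL (m : ℕ) : FULL.testBit m = decide (m < NB) := by
  rw [FULL, Nat.testBit_two_pow_sub_one]

lemma testBit_TOP {i : ℕ} (hi : i < 5) {m : ℕ} (hm : m < NB) :
    ((TOP i).testBit m = true) ↔ dgt m i = 15 := by
  have h0 : 4 * i < 20 := by omega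
  have h1 : 4 * i + 1 < 20 := by omega
  have h2 : 4 * i + 2 < 20 := by omega
  have h3 : 4 * i + 3 < 20 := by omega
  rw [TOP, Nat.testBit_land, Nat.testBit_land, Nat.testBit_land]
  rw [Bool.and_eq_true_iff, Bool.and_eq_true_iff, Bool.and_eq_true_iff]
  rw [testBit_Tm h0, testBit_Tm h1, testBit_Tm h2, testBit_Tm h3]
  simp only [Nat.testBit_eq_decide_div_mod_eq, decide_eq_true_eq, hm, true_and]
  have hNB' : m < 1048576 := hm
  interval_cases i <;> (simp only [dgt]; norm_num <;> omega)

lemma testBit_LOWm {i : ℕ} (hi : i < 5) {m : ℕ} (hm : m < NB) :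
    ((LOWm i).testBit m = true) ↔ ¬ (dgt m i = 15) := by
  rw [LOWm, Nat.testBit_xor, testBit_FULL, decide_eq_true hm, Bool.true_xor,
    Bool.not_eq_true', Bool.eq_false_iff]
  exact not_congr (testBit_TOP hi hm)

def Pm (S i : ℕ) : ℕ := ((S >>> 16 ^ i) &&& LOWm i) ||| ((S <<< (15 * 16 ^ i)) &&& TOP i)

lemma dgt15_le {i m : ℕ} (hi : i < 5) (hd : dgt m i = 15) : 15 * 16 ^ i ≤ m := by
  interval_cases i <;> (simp only [dgt] at hd; omega)

lemma testBit_Pm {i m : ℕ} (hi : i < 5) (hm : m < NB) (S : ℕ) :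
    ((Pm S i).testBit m = true) ↔ (S.testBit (chl m i) = true) := by
  rw [Pm, Nat.testBit_lor, Nat.testBit_land, Nat.testBit_land, Bool.or_eq_true_iff,
    Bool.and_eq_true_iff, Bool.and_eq_true_iff]
  by_cases hd : dgt m i = 15
  · have hle := dgt15_le hi hd
    rw [chl, if_pos hd]
    constructor
    · rintro (⟨_, hlow⟩ | ⟨hbit, _⟩)
      · exact absurd hd ((testBit_LOWm hi hm).mp hlow)
      · rw [Nat.testBit_shiftLeft, Bool.and_eq_true_iff] at hbit
        exact hbit.2
    · intro h
      right
      refine ⟨?_, (testBit_TOP hi hm).mpr hd⟩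
      rw [Nat.testBit_shiftLeft, Bool.and_eq_true_iff]
      exact ⟨by simpa using hle, h⟩
  · rw [chl, if_neg hd]
    constructor
    · rintro (⟨hbit, _⟩ | ⟨_, htop⟩)
      · rw [Nat.testBit_shiftRight] at hbit
        rwa [Nat.add_comm] at hbit
      · exact absurd ((testBit_TOP hi hm).mp htop) hd
    · intro h
      left
      refine ⟨?_, (testBit_LOWm hi hm).mpr hd⟩
      rw [Nat.testBit_shiftRight, Nat.add_comm]
      exact h

def stepA (S : ℕ) : ℕ := Pm S 0 &&& (Pm S 1 &&& (Pm S 2 &&& (Pm S 3 &&& Pm S 4)))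

def stepE (S : ℕ) : ℕ := Pm S 0 ||| (Pm S 1 ||| (Pm S 2 ||| (Pm S 3 ||| Pm S 4)))

lemma testBit_stepA {m : ℕ} (hm : m < NB) (S : ℕ) :
    ((stepA S).testBit m = true) ↔ ∀ i : Fin 5, S.testBit (chl m i.val) = true := by
  rw [stepA, Nat.testBit_land, Nat.testBit_land, Nat.testBit_land, Nat.testBit_land]
  simp only [Bool.and_eq_true_iff]
  rw [testBit_Pm (by norm_num) hm, testBit_Pm (by norm_num) hm, testBit_Pm (by norm_num) hm,
    testBit_Pm (by norm_num) hm, testBit_Pm (by norm_num) hm]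
  constructor
  · rintro ⟨h0, h1, h2, h3, h4⟩ i
    fin_cases i <;> assumption
  · intro h
    exact ⟨h 0, h 1, h 2, h 3, h 4⟩

lemma testBit_stepE {m : ℕ} (hm : m < NB) (S : ℕ) :
    ((stepE S).testBit m = true) ↔ ∃ i : Fin 5, S.testBit (chl m i.val) = true := by
  rw [stepE, Nat.testBit_lor, Nat.testBit_lor, Nat.testBit_lor, Nat.testBit_lor]
  simp only [Bool.or_eq_true_iff]
  rw [testBit_Pm (by norm_num) hm, testBit_Pm (by norm_num) hm, testBit_Pm (by norm_num) hm,
    testBit_Pm (by norm_num) hm, testBit_Pm (by norm_num) hm]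
  constructor
  · rintro (h | h | h | h | h)
    exacts [⟨0, h⟩, ⟨1, h⟩, ⟨2, h⟩, ⟨3, h⟩, ⟨4, h⟩]
  · rintro ⟨i, h⟩
    fin_cases i <;> tauto

/-! ### The initial mask -/

def PB (b : ℕ) : ℕ := Tm b ^^^ Tm (4 + b) ^^^ Tm (8 + b) ^^^ Tm (12 + b) ^^^ Tm (16 + b)

def S0 : ℕ := PB 0 ||| PB 1 ||| PB 2 ||| PB 3

lemma testBit_dgt {i b m : ℕ} (hb : b < 4) : (dgt m i).testBit b = m.testBit (4 * i + b) := by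
  have h16 : (16 : ℕ) ^ i = 2 ^ (4 * i) := by
    rw [show (16 : ℕ) = 2 ^ 4 from rfl, ← pow_mul]
  rw [dgt, h16, show (16 : ℕ) = 2 ^ 4 from rfl, ← Nat.shiftRight_eq_div_pow,
    Nat.testBit_mod_two_pow, Nat.testBit_shiftRight]
  simp [hb]

lemma testBit_AX {b m : ℕ} (hb : b < 4) :
    (AX m).testBit b =
      ((((m.testBit b ^^ m.testBit (4 + b)) ^^ m.testBit (8 + b)) ^^
        m.testBit (12 + b)) ^^ m.testBit (16 + b)) := by
  rw [AX, Nat.testBit_xor, Nat.testBit_xor, Nat.testBit_xor, Nat.testBit_xor,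
    testBit_dgt hb, testBit_dgt hb, testBit_dgt hb, testBit_dgt hb, testBit_dgt hb]
  norm_num

lemma testBit_PB {b m : ℕ} (hb : b < 4) (hm : m < NB) :
    ((PB b).testBit m = true) ↔ ((AX m).testBit b = true) := by
  have hTm : ∀ t, t < 20 → (Tm t).testBit m = m.testBit t := by
    intro t ht
    cases h : m.testBit t with
    | true => exact (testBit_Tm ht m).mpr ⟨hm, h⟩
    | false =>
      apply Bool.eq_false_iff.mpr
      intro hc
      have h2 := ((testBit_Tm ht m).mp hc).2
      rw [h] at h2
      exact Bool.false_ne_true h2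
  rw [PB, Nat.testBit_xor, Nat.testBit_xor, Nat.testBit_xor, Nat.testBit_xor,
    hTm _ (by omega), hTm _ (by omega), hTm _ (by omega), hTm _ (by omega), hTm _ (by omega),
    testBit_AX hb]

lemma AX_lt (m : ℕ) : AX m < 16 := by
  have h : ∀ i, dgt m i < 16 := fun i => Nat.mod_lt _ (by norm_num)
  exact xor_lt_16 (xor_lt_16 (xor_lt_16 (xor_lt_16 (h 0) (h 1)) (h 2)) (h 3)) (h 4)

lemma testBit_S0 {m : ℕ} (hm : m < NB) : (S0.testBit m = true) ↔ AX m ≠ 0 := by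
  rw [S0, Nat.testBit_lor, Nat.testBit_lor, Nat.testBit_lor]
  simp only [Bool.or_eq_true_iff]
  rw [testBit_PB (by norm_num) hm, testBit_PB (by norm_num) hm, testBit_PB (by norm_num) hm,
    testBit_PB (by norm_num) hm]
  constructor
  · rintro (((h | h) | h) | h) <;>
    · intro hz
      rw [hz] at h
      simp [Nat.zero_testBit] at h
  · intro h
    obtain ⟨b, hb, _⟩ := Nat.exists_most_significant_bit h
    have hblt : b < 4 := by
      by_contra hb4
      have : AX m < 2 ^ b := lt_of_lt_of_le (AX_lt m)
        (le_trans (by norm_num) (Nat.pow_le_pow_right (by norm_num) (le_of_not_gt hb4)))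
      rw [Nat.testBit_lt_two_pow this] at hb
      exact absurd hb (by simp)
    have hb4 : b = 0 ∨ b = 1 ∨ b = 2 ∨ b = 3 := by omega
    rcases hb4 with rfl | rfl | rfl | rfl
    · exact Or.inl (Or.inl (Or.inl hb))
    · exact Or.inl (Or.inl (Or.inr hb))
    · exact Or.inl (Or.inr hb)
    · exact Or.inr hb

/-! ### Iteration and correspondence -/

def iter : ℕ → ℕ
  | 0 => S0
  | k + 1 => stepE (stepA (iter k))

lemma chl_lt {i m : ℕ} (hi : i < 5) (hm : m < NB) : chl m i < NB := by
  have hNB : NB = 1048576 := rfl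
  interval_cases i <;> (simp only [chl, dgt, hNB] at hm ⊢; split_ifs with h <;> simp only [h, if_true, if_false] <;> omega)

lemma iter_corr : ∀ k m, m < NB → ((iter k).testBit m = true ↔ Aw m k) := by
  intro k
  induction k with
  | zero =>
    intro m hm
    exact (testBit_S0 hm).trans (Iff.rfl)
  | succ k ih =>
    intro m hm
    rw [iter, testBit_stepE hm]
    show _ ↔ ∃ i : Fin 5, ∀ j : Fin 5, Aw (chl (chl m i.val) j.val) k
    apply exists_congr
    intro i
    rw [testBit_stepA (chl_lt i.isLt hm)]
    apply forall_congr'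
    intro j
    exact ih _ (chl_lt j.isLt (chl_lt i.isLt hm))

set_option maxHeartbeats 10000000 in
lemma iter_stab : iter 8 = iter 7 := by decide

lemma iter_ge7 : ∀ d, iter (7 + d) = iter 7 := by
  intro d
  induction d with
  | zero => rfl
  | succ d ih =>
    rw [show 7 + (d + 1) = (7 + d) + 1 by omega, iter, ih]
    exact iter_stab

set_option maxHeartbeats 10000000 in
lemma bit5 : (iter 5).testBit 0 = true := by decide

set_option maxHeartbeats 10000000 in
lemma bit6 : (iter 6).testBit 0 = true := by decide

set_option maxHeartbeats 10000000 in
lemma bit7 : (iter 7).testBit 0 = true := by decide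

set_option maxHeartbeats 10000000 in
lemma bitlow : ((iter 0).testBit 0 = false) ∧ ((iter 1).testBit 0 = false) ∧
    ((iter 2).testBit 0 = false) ∧ ((iter 3).testBit 0 = false) ∧
    ((iter 4).testBit 0 = false) := by
  refine ⟨?_, ?_, ?_, ?_, ?_⟩ <;> decide

lemma zero_lt_NB : (0 : ℕ) < NB := by norm_num [NB]

lemma enc_zero : enc (fun _ : Fin 5 => 0) = 0 := rfl

end BN5

/-- The first player wins `BN(2n, 5)` iff `n ≥ 5`. -/
theorem first_player_wins_five_stacks_iff (n : ℕ) :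
    BNwins (fun _ : Fin 5 => 0) (2 * n) ↔ n ≥ 5 := by
  open BN5 in
  constructor
  · intro h
    by_contra hn
    push_neg at hn
    have hb : ∀ i : Fin 5, (fun _ : Fin 5 => 0) i + 2 * n < 16 := by
      intro i; simp; omega
    have hA : Aw 0 n := by
      rw [← enc_zero]
      exact Aw_exact n _ hb h
    have hbit := (iter_corr n 0 zero_lt_NB).mpr hA
    obtain ⟨b0, b1, b2, b3, b4⟩ := bitlow
    interval_cases n <;> simp_all
  · intro hn
    have hA : Aw 0 n := by
      rcases Nat.lt_or_ge n 7 with h7 | h7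
      · interval_cases n
        · exact (iter_corr 5 0 zero_lt_NB).mp bit5
        · exact (iter_corr 6 0 zero_lt_NB).mp bit6
      · have hst : iter n = iter 7 := by
          obtain ⟨d, rfl⟩ : ∃ d, n = 7 + d := ⟨n - 7, by omega⟩
          exact iter_ge7 d
        exact (iter_corr n 0 zero_lt_NB).mp (by rw [hst]; exact bit7)
    have := Aw_sound n _ (by rw [enc_zero]; exact hA)
    exact this
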